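/- Define integers n_1 = 1 and n_{k+1} = n_k + 10^k + 1 for k ≥ 1, sets A_k = {n_k + 1, …, n_k + 10^k}, and the real sequence (b_j)_{j≥1} by b_j = 1/√k if j = n_k and b_j = −1/(10^k·√k) if j ∈ A_k. Let t ∈ (0,1] and let Λ ⊆ ℕ_{≥1} be a finite nonempty t-greedy set for b, i.e. min_{i∈Λ} |b_i| ≥ t·sup_{j∉Λ} |b_j|. Let φ := min{k ≥ 1 : n_k ∉ Λ} (well defined since Λ is finite). Then sup_{N ≥ 1} |∑_{i∈Λ, i ≤ N} b_i| ≥ ∑_{k=1}^{φ−1} 1/√k − ∑_{k=1}^{K} 1/√k, where K := max(0, ⌊log_{10}(√φ / t)⌋) and empty sums are 0. -/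

import Mathlib

open Finset

/-- `nn k` is the integer `n_k` of the construction: `n_1 = 1`,
`n_{k+1} = n_k + 10^k + 1` for `k ≥ 1` (the value at `0` is irrelevant). -/
def nn : ℕ → ℕ
  | 0 => 0
  | 1 => 1
  | (k + 2) => nn (k + 1) + 10 ^ (k + 1) + 1

lemma nn_succ (k : ℕ) (hk : 1 ≤ k) : nn (k + 1) = nn k + 10 ^ k + 1 := by
  cases k with
  | zero => omega
  | succ m => rfl

lemma nn_pos (k : ℕ) (hk : 1 ≤ k) : 1 ≤ nn k := by
  cases k with
  | zero => omega
  | succ m => cases m with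
    | zero => simp [nn]
    | succ p => simp only [nn]; exact Nat.le_add_left 1 _

lemma nn_mono {k l : ℕ} (hk : 1 ≤ k) (h : k ≤ l) : nn k ≤ nn l := by
  induction l, h using Nat.le_induction with
  | base => exact le_refl _
  | succ n hn ih =>
      have hp : 1 ≤ 10 ^ n := Nat.one_le_pow _ _ (by omega)
      rw [nn_succ n (le_trans hk hn)]; omega

lemma nn_lt {k l : ℕ} (hk : 1 ≤ k) (h : k < l) : nn k < nn l := by
  have h2 := nn_succ k hk
  have h3 := nn_mono (k := k+1) (l := l) (by omega) h
  have hp : 1 ≤ 10 ^ k := Nat.one_le_pow _ _ (by omega)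
  omega

lemma nn_classify {φ i : ℕ} (hφ : 1 ≤ φ) (hi1 : 1 ≤ i) (hi2 : i < nn φ) :
    ∃ k, 1 ≤ k ∧ k < φ ∧ nn k ≤ i ∧ i ≤ nn k + 10 ^ k ∧
      k = Nat.findGreatest (fun k => nn k ≤ i) φ := by
  set c := Nat.findGreatest (fun k => nn k ≤ i) φ with hc
  have hP1 : nn 1 ≤ i := by simpa [nn] using hi1
  have h1 : 1 ≤ c := Nat.le_findGreatest (P := fun k => nn k ≤ i) hφ hP1
  have hspec : nn c ≤ i :=
    Nat.findGreatest_spec (P := fun k => nn k ≤ i) (m := 1) hφ hP1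
  have hcφ : c ≤ φ := Nat.findGreatest_le φ
  have hlt : c < φ := by
    rcases eq_or_lt_of_le hcφ with h | h
    · exfalso; rw [h] at hspec; omega
    · exact h
  have hgr : ¬ (nn (c + 1) ≤ i) :=
    Nat.findGreatest_is_greatest (P := fun k => nn k ≤ i) (n := φ) (k := c + 1)
      (by omega) (by omega)
  rw [nn_succ c h1] at hgr
  exact ⟨c, h1, hlt, hspec, by omega, rfl⟩

/-- Lower bound for the norm of a weak greedy sum of the element `b`:
if `Λ` is a finite nonempty `t`-greedy set for `b` and
`φ = min{k ≥ 1 : n_k ∉ Λ}`, then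
`sup_{N ≥ 1} |∑_{i ∈ Λ, i ≤ N} b_i| ≥ ∑_{k=1}^{φ-1} 1/√k − ∑_{k=1}^{K} 1/√k`,
where `K = max(0, ⌊log₁₀(√φ / t)⌋)`. -/
theorem stmt_3 (b : ℕ → ℝ)
    (hb1 : ∀ k : ℕ, 1 ≤ k → b (nn k) = 1 / Real.sqrt k)
    (hb2 : ∀ k : ℕ, 1 ≤ k → ∀ j : ℕ, nn k < j → j ≤ nn k + 10 ^ k →
      b j = -(1 / (10 ^ k * Real.sqrt k)))
    (t : ℝ) (ht0 : 0 < t) (ht1 : t ≤ 1)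
    (Λ : Finset ℕ) (hne : Λ.Nonempty) (hpos : ∀ i ∈ Λ, 1 ≤ i)
    (hgreedy : ∀ i ∈ Λ, ∀ j : ℕ, 1 ≤ j → j ∉ Λ → t * |b j| ≤ |b i|)
    (φ : ℕ) (hφ1 : 1 ≤ φ) (hφ2 : nn φ ∉ Λ)
    (hφmin : ∀ k : ℕ, 1 ≤ k → k < φ → nn k ∈ Λ) :
    (∑ k ∈ Finset.Icc 1 (φ - 1), 1 / Real.sqrt k) -
      (∑ k ∈ Finset.Icc 1 (⌊Real.logb 10 (Real.sqrt φ / t)⌋.toNat), 1 / Real.sqrt k)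
    ≤ ⨆ N : ℕ, |∑ i ∈ Λ.filter (fun i => i ≤ N + 1), b i| := by
  classical
  set K := (⌊Real.logb 10 (Real.sqrt φ / t)⌋).toNat with hK
  have hnnφ : 1 ≤ nn φ := nn_pos φ hφ1
  set f : ℕ → ℝ := fun N => |∑ i ∈ Λ.filter (fun i => i ≤ N + 1), b i| with hf
  have hbdd : BddAbove (Set.range f) := by
    refine ⟨∑ i ∈ Λ, |b i|, ?_⟩
    rintro _ ⟨N, rfl⟩
    calc f N ≤ ∑ i ∈ Λ.filter (fun i => i ≤ N + 1), |b i| :=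
          Finset.abs_sum_le_sum_abs _ _
      _ ≤ ∑ i ∈ Λ, |b i| := Finset.sum_le_sum_of_subset_of_nonneg
          (Finset.filter_subset _ _) (fun i _ _ => abs_nonneg _)
  have hsup : f (nn φ - 1) ≤ ⨆ N, f N := le_ciSup hbdd _
  have hNfix : (nn φ - 1) + 1 = nn φ := by omega
  set F := Λ.filter (fun i => i ≤ nn φ) with hFdef
  have hfval : f (nn φ - 1) = |∑ i ∈ F, b i| := by
    rw [hf]; simp only [hNfix, hFdef]
  -- the positive part
  set P := (Finset.Icc 1 (φ - 1)).image nn with hPdef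
  have hPF : P ⊆ F := by
    intro x hx
    rw [hPdef] at hx
    obtain ⟨k, hk, rfl⟩ := Finset.mem_image.mp hx
    rw [Finset.mem_Icc] at hk
    rw [hFdef, Finset.mem_filter]
    exact ⟨hφmin k hk.1 (by omega), nn_mono hk.1 (by omega)⟩
  have hPsum : ∑ i ∈ P, b i = ∑ k ∈ Finset.Icc 1 (φ - 1), 1 / Real.sqrt k := by
    rw [hPdef, Finset.sum_image (fun x hx y hy hxy => ?_)]
    · refine Finset.sum_congr rfl fun k hk => hb1 k (Finset.mem_Icc.mp hk).1
    · rw [Finset.mem_coe, Finset.mem_Icc] at hx hy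
      by_contra hne'
      rcases Nat.lt_or_ge x y with h | h
      · exact absurd hxy (Nat.ne_of_lt (nn_lt hx.1 h))
      · exact absurd hxy.symm (Nat.ne_of_lt (nn_lt hy.1 (by omega)))
  -- classification of the negative part
  set c : ℕ → ℕ := fun i => Nat.findGreatest (fun k => nn k ≤ i) φ with hcdef
  have hsφ : 0 < Real.sqrt φ := Real.sqrt_pos.mpr (by exact_mod_cast hφ1)
  have hmem : ∀ i ∈ F \ P, 1 ≤ c i ∧ c i ≤ K ∧ nn (c i) < i ∧
      i ≤ nn (c i) + 10 ^ (c i) ∧ b i = -(1 / (10 ^ (c i) * Real.sqrt (c i))) := by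
    intro i hi
    rw [Finset.mem_sdiff, hFdef, Finset.mem_filter] at hi
    obtain ⟨⟨hiΛ, hile⟩, hiP⟩ := hi
    have hi1 : 1 ≤ i := hpos i hiΛ
    have hine : i ≠ nn φ := fun h => hφ2 (h ▸ hiΛ)
    have hilt : i < nn φ := lt_of_le_of_ne hile hine
    obtain ⟨k, hk1, hkφ, hle, hge, hkc⟩ := nn_classify hφ1 hi1 hilt
    have hkc' : c i = k := hkc.symm
    have hik : nn k ≠ i := by
      intro h
      apply hiP
      rw [hPdef, Finset.mem_image]
      exact ⟨k, Finset.mem_Icc.mpr ⟨hk1, by omega⟩, h⟩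
    have hlt' : nn k < i := lt_of_le_of_ne hle hik
    have hbi : b i = -(1 / (10 ^ k * Real.sqrt k)) := hb2 k hk1 i hlt' hge
    -- greedy bound : k ≤ K
    have hsk : 1 ≤ Real.sqrt k := by
      rw [show (1:ℝ) = Real.sqrt 1 by simp]
      exact Real.sqrt_le_sqrt (by exact_mod_cast hk1)
    have h10 : (0:ℝ) < 10 ^ k := by positivity
    have hg := hgreedy i hiΛ (nn φ) hnnφ hφ2
    rw [hbi, hb1 φ hφ1] at hg
    rw [abs_neg, abs_of_pos (by positivity), abs_of_pos (by positivity)] at hg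
    -- hg : t * (1/√φ) ≤ 1/(10^k * √k)
    have h2 : t * 10 ^ k ≤ Real.sqrt φ := by
      rw [mul_one_div, div_le_div_iff₀ hsφ (by positivity)] at hg
      nlinarith
    have h3 : (10:ℝ) ^ k ≤ Real.sqrt φ / t := by
      rw [le_div_iff₀ ht0]; linarith [mul_comm t ((10:ℝ) ^ k)]
    have hlog : (k : ℝ) ≤ Real.logb 10 (Real.sqrt φ / t) := by
      have := Real.logb_le_logb_of_le (b := 10) (by norm_num) h10 h3
      rwa [Real.logb_pow, Real.logb_self_eq_one (by norm_num), mul_one] at this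
    have hfl : (k : ℤ) ≤ ⌊Real.logb 10 (Real.sqrt φ / t)⌋ :=
      Int.le_floor.mpr (by exact_mod_cast hlog)
    have hkK : k ≤ K := by rw [hK]; simpa using Int.toNat_le_toNat hfl
    rw [hkc']
    exact ⟨hk1, hkK, hlt', hge, hbi⟩
  have hmaps : ∀ i ∈ F \ P, c i ∈ Finset.Icc 1 K := fun i hi =>
    Finset.mem_Icc.mpr ⟨(hmem i hi).1, (hmem i hi).2.1⟩
  -- bound the negative part fiberwise
  have hneg : ∑ i ∈ F \ P, (-b i) ≤ ∑ k ∈ Finset.Icc 1 K, 1 / Real.sqrt k := by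
    rw [← Finset.sum_fiberwise_of_maps_to hmaps (fun i => -b i)]
    refine Finset.sum_le_sum fun k hk => ?_
    rw [Finset.mem_Icc] at hk
    have hsk : 1 ≤ Real.sqrt k := by
      rw [show (1:ℝ) = Real.sqrt 1 by simp]
      exact Real.sqrt_le_sqrt (by exact_mod_cast hk.1)
    have h10 : (0:ℝ) < 10 ^ k := by positivity
    set s := (F \ P).filter (fun i => c i = k) with hsdef
    have hcard : s.card ≤ 10 ^ k := by
      have hsub : s ⊆ Finset.Ioc (nn k) (nn k + 10 ^ k) := by
        intro i hi
        rw [hsdef, Finset.mem_filter] at hi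
        obtain ⟨hi', hci⟩ := hi
        have h := hmem i hi'
        rw [hci] at h
        exact Finset.mem_Ioc.mpr ⟨h.2.2.1, h.2.2.2.1⟩
      calc s.card ≤ (Finset.Ioc (nn k) (nn k + 10 ^ k)).card := Finset.card_le_card hsub
        _ = 10 ^ k := by
            have h1 : 1 ≤ 10 ^ k := Nat.one_le_pow _ _ (by omega)
            rw [Nat.card_Ioc]; omega
    have hbound : ∀ i ∈ s, -b i ≤ 1 / (10 ^ k * Real.sqrt k) := by
      intro i hi
      rw [hsdef, Finset.mem_filter] at hi
      obtain ⟨hi', hci⟩ := hi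
      have h := (hmem i hi').2.2.2.2
      rw [hci] at h
      rw [h, neg_neg]
    calc ∑ i ∈ s, (-b i) ≤ s.card • (1 / (10 ^ k * Real.sqrt k)) :=
          Finset.sum_le_card_nsmul _ _ _ hbound
      _ = (s.card : ℝ) * (1 / (10 ^ k * Real.sqrt k)) := nsmul_eq_mul _ _
      _ ≤ (10 ^ k : ℝ) * (1 / (10 ^ k * Real.sqrt k)) := by
          apply mul_le_mul_of_nonneg_right _ (by positivity)
          exact_mod_cast hcard
      _ = 1 / Real.sqrt k := by
          rw [mul_one_div]
          rw [div_eq_div_iff (by positivity) (by positivity)]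
          ring
  have hsplit : ∑ i ∈ F \ P, b i + ∑ i ∈ P, b i = ∑ i ∈ F, b i :=
    Finset.sum_sdiff hPF
  have hFsum : (∑ k ∈ Finset.Icc 1 (φ - 1), 1 / Real.sqrt k) -
      (∑ k ∈ Finset.Icc 1 K, 1 / Real.sqrt k) ≤ ∑ i ∈ F, b i := by
    have h1 : -∑ k ∈ Finset.Icc 1 K, 1 / Real.sqrt k ≤ ∑ i ∈ F \ P, b i := by
      rw [Finset.sum_neg_distrib] at hneg
      linarith
    linarith [hPsum, hsplit]
  calc (∑ k ∈ Finset.Icc 1 (φ - 1), 1 / Real.sqrt k) -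
        (∑ k ∈ Finset.Icc 1 K, 1 / Real.sqrt k) ≤ ∑ i ∈ F, b i := hFsum
    _ ≤ |∑ i ∈ F, b i| := le_abs_self _
    _ = f (nn φ - 1) := hfval.symm
    _ ≤ ⨆ N, f N := hsup
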